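/- Consider a group of N sequential decision makers with individual decision probabilities p_{i|j}(t), run with the q-out-of-N aggregation rule, where for each hypothesis j there is a time t_j with p_{0|j}(t_j) > 0 and p_{1|j}(t_j) > 0. The group almost surely reaches a decision (for both hypotheses) if and only if: (i) each individual almost surely reaches a decision, (ii) N is odd, and (iii) 1 ≤ q ≤ ⌈N/2⌉. -/

import Mathlib

open MeasureTheory ProbabilityTheory Finset

/-- Discrete σ-algebra on the outcome space of a single sequential decision maker:
`some (t, i)` means "decide for hypothesis `i` at time `t`", `none` means "never decide". -/
noncomputable instance : MeasurableSpace (Option (ℕ × Bool)) := ⊤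

open Classical in
/-- Number of decision makers having decided for hypothesis `i` up to time `t`. -/
noncomputable def countVotes {N : ℕ} (d : Fin N → Option (ℕ × Bool)) (i : Bool) (t : ℕ) : ℕ :=
  (Finset.univ.filter fun k => ∃ s ≤ t, d k = some (s, i)).card

/-- The `q` out of `N` fusion rule reaches a decision: at some time `t`, one hypothesis
has strictly more votes than the other and at least `q` votes. -/
def groupDecides {N : ℕ} (q : ℕ) (d : Fin N → Option (ℕ × Bool)) : Prop :=
  ∃ t : ℕ,
    (countVotes d false t < countVotes d true t ∧ q ≤ countVotes d true t) ∨
    (countVotes d true t < countVotes d false t ∧ q ≤ countVotes d false t)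

instance : MeasurableSingletonClass (Option (ℕ × Bool)) :=
  ⟨fun _ => MeasurableSpace.measurableSet_top⟩

open Classical

/-- On a deterministic profile where decision maker `k` behaves according to `f k`
(deciding at time `t0`), the vote counts are explicit. -/
lemma countVotes_fixed {N : ℕ} (f : Fin N → Option Bool) (t0 t : ℕ) (i : Bool) :
    countVotes (fun k => Option.map (fun b => (t0, b)) (f k)) i t
      = if t0 ≤ t then (Finset.univ.filter fun k => f k = some i).card else 0 := by
  unfold countVotes
  split_ifs with h
  · congr 1
    apply Finset.ext
    intro k
    simp only [Finset.mem_filter, Finset.mem_univ, true_and]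
    constructor
    · rintro ⟨s, hs, he⟩
      cases hf : f k with
      | none => rw [hf] at he; simp at he
      | some b =>
        rw [hf] at he
        simp only [Option.map_some, Option.some.injEq, Prod.mk.injEq] at he
        rw [he.2]
    · intro he
      exact ⟨t0, h, by rw [he]; rfl⟩
  · rw [Finset.card_eq_zero]
    apply Finset.eq_empty_of_forall_notMem
    intro k hk
    simp only [Finset.mem_filter, Finset.mem_univ, true_and] at hk
    rcases hk with ⟨s, hs, he⟩
    cases hf : f k with
    | none => rw [hf] at he; simp at he
    | some b =>
      rw [hf] at he
      simp only [Option.map_some, Option.some.injEq, Prod.mk.injEq] at he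
      omega

lemma not_groupDecides_fixed {N q : ℕ} (hq1 : 1 ≤ q) (f : Fin N → Option Bool) (t0 : ℕ)
    (hcount : ¬ (((Finset.univ.filter fun k => f k = some false).card
          < (Finset.univ.filter fun k => f k = some true).card
        ∧ q ≤ (Finset.univ.filter fun k => f k = some true).card)
      ∨ ((Finset.univ.filter fun k => f k = some true).card
          < (Finset.univ.filter fun k => f k = some false).card
        ∧ q ≤ (Finset.univ.filter fun k => f k = some false).card))) :
    ¬ groupDecides q (fun k => Option.map (fun b => (t0, b)) (f k)) := by
  rintro ⟨t, ht⟩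
  rw [countVotes_fixed, countVotes_fixed] at ht
  split_ifs at ht with h
  · exact hcount ht
  · omega

theorem group_almost_sure_decision_iff
    (N q : ℕ) (hN : 0 < N) (hq1 : 1 ≤ q) (hqN : q ≤ N)
    (Ω : Bool → Type) [∀ j, MeasurableSpace (Ω j)]
    (P : ∀ j, Measure (Ω j)) [∀ j, IsProbabilityMeasure (P j)]
    (D : ∀ j : Bool, Fin N → Ω j → Option (ℕ × Bool))
    (p : Bool → Bool → ℕ → ℝ)
    (hmeas : ∀ j k, Measurable (D j k))
    (hmarg : ∀ j k t i, (P j) {ω | D j k ω = some (t, i)} = ENNReal.ofReal (p i j t))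
    (hindep : ∀ j, iIndepFun (m := fun _ : Fin N => (inferInstance :
        MeasurableSpace (Option (ℕ × Bool)))) (D j) (P j))
    (tj : Bool → ℕ)
    (hpos : ∀ j, 0 < p false j (tj j) ∧ 0 < p true j (tj j)) :
    (∀ j, (P j) {ω | groupDecides q (fun k => D j k ω)} = 1)
      ↔ ((∀ j k, (P j) {ω | D j k ω ≠ none} = 1) ∧ Odd N ∧ 1 ≤ q ∧ q ≤ (N + 1) / 2) := by
  -- measurability of the group decision event
  have hGSmeas : ∀ j, MeasurableSet {ω | groupDecides q (fun k => D j k ω)} := by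
    intro j
    have he : {ω | groupDecides q (fun k => D j k ω)}
        = (fun ω (k : Fin N) => D j k ω) ⁻¹' {d | groupDecides q d} := rfl
    rw [he]
    exact (measurable_pi_lambda _ (fun k => hmeas j k)) MeasurableSet.of_discrete
  have hnemeas : ∀ j k, MeasurableSet {ω | D j k ω ≠ none} := by
    intro j k
    exact (hmeas j k) (MeasurableSet.of_discrete (s := {x | x ≠ none}))
  -- key lemma: from a "bad" deterministic profile of positive probability, the group
  -- fails to have the almost sure decision property.
  have hnever : ∀ (j : Bool) (f : Fin N → Option Bool),
      (∀ k, f k = none → (P j) {ω | D j k ω = none} ≠ 0) →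
      (¬ (((Finset.univ.filter fun k => f k = some false).card
            < (Finset.univ.filter fun k => f k = some true).card
          ∧ q ≤ (Finset.univ.filter fun k => f k = some true).card)
        ∨ ((Finset.univ.filter fun k => f k = some true).card
            < (Finset.univ.filter fun k => f k = some false).card
          ∧ q ≤ (Finset.univ.filter fun k => f k = some false).card))) →
      (P j) {ω | groupDecides q (fun k => D j k ω)} ≠ 1 := by
    intro j f hf hcount h1
    set v : Fin N → Option (ℕ × Bool) := fun k => Option.map (fun b => (tj j, b)) (f k) with hv
    have hE : (P j) (⋂ k, {ω | D j k ω = v k}) = ∏ k, (P j) {ω | D j k ω = v k} := by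
      apply (hindep j).meas_iInter
      intro k
      exact ⟨{v k}, MeasurableSpace.measurableSet_top, rfl⟩
    have hEpos : (P j) (⋂ k, {ω | D j k ω = v k}) ≠ 0 := by
      rw [hE, Finset.prod_ne_zero_iff]
      intro k _
      cases hfk : f k with
      | none =>
        have : v k = none := by simp [hv, hfk]
        rw [this]
        exact hf k hfk
      | some b =>
        have : {ω | D j k ω = v k} = {ω | D j k ω = some (tj j, b)} := by
          simp [hv, hfk]
        rw [this, hmarg]
        simp only [ne_eq, ENNReal.ofReal_eq_zero, not_le]
        cases b
        · exact (hpos j).1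
        · exact (hpos j).2
    have hsub : (⋂ k, {ω | D j k ω = v k}) ⊆ {ω | groupDecides q (fun k => D j k ω)}ᶜ := by
      intro ω hω
      simp only [Set.mem_iInter, Set.mem_setOf_eq] at hω
      have hfun : (fun k => D j k ω) = v := funext hω
      simp only [Set.mem_compl_iff, Set.mem_setOf_eq, hfun, hv]
      exact not_groupDecides_fixed hq1 f (tj j) hcount
    have h0 : (P j) {ω | groupDecides q (fun k => D j k ω)}ᶜ = 0 :=
      (prob_compl_eq_zero_iff (hGSmeas j)).mpr h1
    exact hEpos (measure_mono_null hsub h0)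
  constructor
  · -- forward direction
    intro h
    -- N is odd
    have hodd : Odd N := by
      by_contra hodd
      have heven : Even N := Nat.not_odd_iff_even.mp hodd
      obtain ⟨S, hSsub, hScard⟩ :=
        Finset.exists_subset_card_eq (s := (Finset.univ : Finset (Fin N))) (n := N / 2)
          (by simp; omega)
      set f : Fin N → Option Bool := fun k => if k ∈ S then some true else some false with hfdef
      have h1 : (Finset.univ.filter fun k => f k = some true) = S := by
        apply Finset.ext; intro k
        by_cases hk : k ∈ S <;> simp [hfdef, hk]
      have h2 : (Finset.univ.filter fun k => f k = some false) = Finset.univ \ S := by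
        apply Finset.ext; intro k
        by_cases hk : k ∈ S <;> simp [hfdef, hk]
      have h2c : (Finset.univ \ S).card = N - N / 2 := by
        rw [Finset.card_sdiff_of_subset hSsub, hScard, Finset.card_univ, Fintype.card_fin]
      apply hnever true f
      · intro k hk
        by_cases hkS : k ∈ S <;> simp [hfdef, hkS] at hk
      · rw [h1, h2, hScard, h2c]
        rcases heven with ⟨m, hm⟩
        omega
      · exact h true
    -- q is at most (N+1)/2
    have hq2 : q ≤ (N + 1) / 2 := by
      by_contra hq'
      push_neg at hq'
      obtain ⟨S, hSsub, hScard⟩ :=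
        Finset.exists_subset_card_eq (s := (Finset.univ : Finset (Fin N))) (n := (N + 1) / 2)
          (by simp; omega)
      set f : Fin N → Option Bool := fun k => if k ∈ S then some true else some false with hfdef
      have h1 : (Finset.univ.filter fun k => f k = some true) = S := by
        apply Finset.ext; intro k
        by_cases hk : k ∈ S <;> simp [hfdef, hk]
      have h2 : (Finset.univ.filter fun k => f k = some false) = Finset.univ \ S := by
        apply Finset.ext; intro k
        by_cases hk : k ∈ S <;> simp [hfdef, hk]
      have h2c : (Finset.univ \ S).card = N - (N + 1) / 2 := by
        rw [Finset.card_sdiff_of_subset hSsub, hScard, Finset.card_univ, Fintype.card_fin]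
      exact hnever true f
        (by intro k hk; by_cases hkS : k ∈ S <;> simp [hfdef, hkS] at hk)
        (by rw [h1, h2, hScard, h2c]; omega)
        (h true)
    -- each individual almost surely decides
    have hind : ∀ j k, (P j) {ω | D j k ω ≠ none} = 1 := by
      intro j k
      by_contra hne
      have hne0 : (P j) {ω | D j k ω = none} ≠ 0 := by
        intro h0
        apply hne
        rw [← prob_compl_eq_zero_iff (hnemeas j k)]
        have : {ω | D j k ω ≠ none}ᶜ = {ω | D j k ω = none} := by
          ext ω; simp
        rw [this]
        exact h0
      have hkS' : ((Finset.univ : Finset (Fin N)).erase k).card = N - 1 := by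
        rw [Finset.card_erase_of_mem (Finset.mem_univ k), Finset.card_univ, Fintype.card_fin]
      obtain ⟨S, hSsub, hScard⟩ :=
        Finset.exists_subset_card_eq (s := (Finset.univ : Finset (Fin N)).erase k)
          (n := (N - 1) / 2) (by rw [hkS']; omega)
      have hkS : k ∉ S := fun hkk => (Finset.mem_erase.mp (hSsub hkk)).1 rfl
      set f : Fin N → Option Bool :=
        fun k' => if k' = k then none else if k' ∈ S then some true else some false with hfdef
      have h1 : (Finset.univ.filter fun k' => f k' = some true) = S := by
        apply Finset.ext; intro k'
        by_cases hk1 : k' = k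
        · subst hk1; simp [hfdef, hkS]
        · by_cases hk2 : k' ∈ S <;> simp [hfdef, hk1, hk2]
      have h2 : (Finset.univ.filter fun k' => f k' = some false)
          = Finset.univ \ insert k S := by
        apply Finset.ext; intro k'
        by_cases hk1 : k' = k
        · subst hk1; simp [hfdef]
        · by_cases hk2 : k' ∈ S <;> simp [hfdef, hk1, hk2]
      have h2c : (Finset.univ \ insert k S).card = N - ((N - 1) / 2 + 1) := by
        rw [Finset.card_sdiff_of_subset (by intro x hx; exact Finset.mem_univ x),
          Finset.card_insert_of_notMem hkS, hScard, Finset.card_univ, Fintype.card_fin]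
      apply hnever j f
      · intro k' hk'
        have hk1 : k' = k := by
          by_contra hk1
          by_cases hk2 : k' ∈ S <;> simp [hfdef, hk1, hk2] at hk'
        subst hk1
        exact hne0
      · rw [h1, h2, hScard, h2c]
        rcases hodd with ⟨m, hm⟩
        omega
      · exact h j
    exact ⟨hind, hodd, hq1, hq2⟩
  · -- backward direction
    rintro ⟨hind, hodd, _, hq2⟩ j
    set G := ⋂ k, {ω | D j k ω ≠ none} with hGdef
    have hGm : MeasurableSet G := MeasurableSet.iInter (fun k => hnemeas j k)
    have hGc : (P j) Gᶜ = 0 := by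
      rw [hGdef, Set.compl_iInter]
      apply measure_iUnion_null
      intro k
      exact (prob_compl_eq_zero_iff (hnemeas j k)).mpr (hind j k)
    have hG1 : (P j) G = 1 := (prob_compl_eq_zero_iff hGm).mp hGc
    have hsub : G ⊆ {ω | groupDecides q (fun k => D j k ω)} := by
      intro ω hω
      simp only [hGdef, Set.mem_iInter, Set.mem_setOf_eq] at hω
      set d : Fin N → Option (ℕ × Bool) := fun k => D j k ω with hd
      have hdk : ∀ k, d k = some (((d k).getD (0, true)).1, ((d k).getD (0, true)).2) := by
        intro k
        rcases Option.ne_none_iff_exists'.mp (hω k) with ⟨x, hx⟩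
        rw [show d k = D j k ω from rfl, hx]
        simp
      set sfun : Fin N → ℕ := fun k => ((d k).getD (0, true)).1 with hsfun
      set ifun : Fin N → Bool := fun k => ((d k).getD (0, true)).2 with hifun
      set t := Finset.univ.sup sfun with ht
      have hfilter : ∀ i, (Finset.univ.filter fun k => ∃ s ≤ t, d k = some (s, i))
          = Finset.univ.filter fun k => ifun k = i := by
        intro i
        apply Finset.ext; intro k
        simp only [Finset.mem_filter, Finset.mem_univ, true_and]
        constructor
        · rintro ⟨s, hs, he⟩
          rw [hdk k] at he
          simp only [Option.some.injEq, Prod.mk.injEq] at he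
          exact he.2
        · intro he
          exact ⟨sfun k, Finset.le_sup (Finset.mem_univ k), by rw [hdk k, ← he]⟩
      have hcv : ∀ i, countVotes d i t = (Finset.univ.filter fun k => ifun k = i).card := by
        intro i
        unfold countVotes
        congr 1
        apply Finset.ext; intro k
        have := hfilter i
        rw [Finset.ext_iff] at this
        have hk := this k
        simp only [Finset.mem_filter, Finset.mem_univ, true_and] at hk ⊢
        exact hk
      have hab : (Finset.univ.filter fun k => ifun k = true).card
          + (Finset.univ.filter fun k => ifun k = false).card = N := by
        have hneg : (Finset.univ.filter fun k => ifun k = false)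
            = Finset.univ.filter fun k => ¬ (ifun k = true) := by
          apply Finset.ext; intro k
          simp only [Finset.mem_filter, Finset.mem_univ, true_and, Bool.not_eq_true]
        rw [hneg, Finset.card_filter_add_card_filter_not, Finset.card_univ,
          Fintype.card_fin]
      refine ⟨t, ?_⟩
      rw [show (fun k => D j k ω) = d from rfl, hcv true, hcv false]
      rcases hodd with ⟨m, hm⟩
      omega
    have hle : (1 : ENNReal) ≤ (P j) {ω | groupDecides q (fun k => D j k ω)} :=
      hG1 ▸ measure_mono hsub
    exact le_antisymm prob_le_one hle
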